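/- arXiv:2305.07274 — 2 statements merged into one kernel-verified Lean document; each statement's English description precedes it below -/
import Mathlib

section
/- For every sufficiently large positive integer n, setting m = n − ⌈log₄ n⌉ − 5 and T = ⌈5n/2⌉, there exists an (n,T,B)-synthesis code C ⊆ Σ^n with |C| ≥ 2^{2m} = 2^{2n − 2⌈log₄ n⌉ − 10}; that is, a code of length n, synthesis time at most 2.5n, correcting a single insertion or deletion, with redundancy at most 2⌈log₄ n⌉ + 10 bits. -/
/-- A list of integers is quaternary if all entries lie in {1,2,3,4}. -/
def IsQ (x : List ℤ) : Prop := ∀ a ∈ x, 1 ≤ a ∧ a ≤ 4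

/-- The alternating quaternary supersequence 1,2,3,4,1,2,3,4,... of length `T`. -/
def altSeq (T : ℕ) : List ℤ := (List.range T).map (fun i => ((i % 4 : ℕ) : ℤ) + 1)

/-- The synthesis time of `x`: the least `T` such that `x` is a subsequence of `altSeq T`. -/
noncomputable def synTime (x : List ℤ) : ℕ := sInf {T : ℕ | x.Sublist (altSeq T)}

/-- The shifted modulo: the unique element of {1,2,3,4} congruent to `a` mod 4. -/
def mods4 (a : ℤ) : ℤ := (a - 1) % 4 + 1

/-- The differential word of `x`. -/
def diffWord (x : List ℤ) : List ℤ := List.zipWith (fun p c => mods4 (c - p)) (0 :: x) x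

/-- The set of quaternary words of length `n` with synthesis time at most `T`. -/
def W (n : ℕ) (T : ℤ) : Set (List ℤ) :=
  {x | x.length = n ∧ IsQ x ∧ (synTime x : ℤ) ≤ T}

/-- `A n T` is the number of quaternary words of length `n` with synthesis time at most `T`. -/
noncomputable def A (n : ℕ) (T : ℤ) : ℕ := (W n T).ncard

/-- The single-indel ball of `x`. -/
def ball (x : List ℤ) : Set (List ℤ) :=
  {y | y = x ∨ (y.length + 1 = x.length ∧ y.Sublist x) ∨
       (x.length + 1 = y.length ∧ IsQ y ∧ x.Sublist y)}

/-- The auxiliary binary sequence of `x` (as 0/1 naturals). -/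
def auxSeq (x : List ℤ) : List ℕ :=
  List.zipWith (fun a b => if a ≤ b then 1 else 0) x x.tail

/-- VT syndrome of a binary word: `∑ i·w_i` with positions starting from 1. -/
def vtSyn (w : List ℕ) : ℕ := ∑ i ∈ Finset.range w.length, (i + 1) * w.getD i 0

/-- The quaternary VT code. -/
def VTn (n : ℕ) (a : ZMod n) (b : ZMod 4) : Set (List ℤ) :=
  {x | x.length = n ∧ IsQ x ∧ ((vtSyn (auxSeq x) : ℕ) : ZMod n) = a ∧
       ((x.sum : ℤ) : ZMod 4) = b}

/-- The quaternary VT code with synthesis time constraint. -/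
def VTnT (n : ℕ) (a : ZMod n) (b : ZMod 4) (T : ℤ) : Set (List ℤ) :=
  {x ∈ VTn n a b | (synTime x : ℤ) ≤ T}


lemma sum_range_getD (w : List ℕ) : ∑ i ∈ Finset.range w.length, w.getD i 0 = w.sum := by
  induction w with
  | nil => simp
  | cons a t ih =>
    rw [List.length_cons, Finset.sum_range_succ']
    simp only [List.getD_cons_succ, List.getD_cons_zero, List.sum_cons]
    omega

lemma vtSyn_cons (a : ℕ) (t : List ℕ) : vtSyn (a :: t) = a + t.sum + vtSyn t := by
  unfold vtSyn
  rw [List.length_cons, Finset.sum_range_succ']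
  simp only [List.getD_cons_succ, List.getD_cons_zero]
  have : ∑ i ∈ Finset.range t.length, (i + 1 + 1) * t.getD i 0
      = ∑ i ∈ Finset.range t.length, ((i+1) * t.getD i 0 + t.getD i 0) := by
    apply Finset.sum_congr rfl; intro i _; ring
  rw [this, Finset.sum_add_distrib, sum_range_getD]
  ring

lemma sum_insertIdx (w : List ℕ) (i : ℕ) (b : ℕ) (h : i ≤ w.length) :
    (w.insertIdx i b).sum = w.sum + b := by
  induction w generalizing i with
  | nil => simp at h; subst h; simp
  | cons a t ih =>
    cases i with
    | zero => simp [List.insertIdx]; omega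
    | succ i =>
      rw [List.insertIdx_succ_cons, List.sum_cons, List.sum_cons, ih i (by simpa using h)]
      omega

lemma vtSyn_insertIdx (w : List ℕ) (i : ℕ) (b : ℕ) (h : i ≤ w.length) :
    vtSyn (w.insertIdx i b) = vtSyn w + (i+1)*b + (w.drop i).sum := by
  induction w generalizing i with
  | nil => simp at h; subst h; simp [vtSyn_cons, vtSyn]
  | cons a t ih =>
    cases i with
    | zero =>
      simp only [List.insertIdx]
      rw [vtSyn_cons]
      simp [vtSyn_cons]
      ring
    | succ i =>
      rw [List.insertIdx_succ_cons, vtSyn_cons, ih i (by simpa using h),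
        sum_insertIdx t i b (by simpa using h), vtSyn_cons, List.drop_succ_cons]
      ring

lemma bits_sum_le (w : List ℕ) (hw : ∀ x ∈ w, x ≤ 1) : w.sum ≤ w.length := by
  induction w with
  | nil => simp
  | cons a t ih =>
    simp only [List.sum_cons, List.length_cons]
    have := hw a (by simp)
    have := ih (fun x hx => hw x (by simp [hx]))
    omega

lemma bits_sum_eq (w : List ℕ) (hw : ∀ x ∈ w, x ≤ 1) (h : w.sum = w.length) :
    ∀ x ∈ w, x = 1 := by
  induction w with
  | nil => simp
  | cons a t ih =>
    simp only [List.sum_cons, List.length_cons] at h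
    have h1 := hw a (by simp)
    have h2 := bits_sum_le t (fun x hx => hw x (by simp [hx]))
    intro x hx
    rcases List.mem_cons.1 hx with rfl | hx
    · omega
    · exact ih (fun x hx => hw x (by simp [hx])) (by omega) x hx

lemma insertIdx_append (l t : List ℕ) (b : ℕ) :
    (l ++ t).insertIdx l.length b = l ++ b :: t := by
  induction l with
  | nil => simp [List.insertIdx]
  | cons a l ih => simpa [List.insertIdx_succ_cons] using ih

lemma drop_sum_split (w : List ℕ) (i j : ℕ) (hij : i ≤ j) :
    (w.drop i).sum = ((w.take j).drop i).sum + (w.drop j).sum := by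
  conv_lhs => rw [← List.take_append_drop j w]
  rw [List.drop_append, List.sum_append]
  rcases le_or_gt j w.length with h | h
  · have : i - (w.take j).length = 0 := by simp [List.length_take]; omega
    rw [this, List.drop_zero]
  · have : w.drop j = [] := by simp; omega
    simp [this]

lemma cons_replicate_append {α : Type*} (m : ℕ) (b : α) (d : List α) :
    b :: (List.replicate m b ++ d) = List.replicate m b ++ b :: d := by
  induction m with
  | zero => simp
  | succ m ih => rw [List.replicate_succ, List.cons_append, List.cons_append, ih]

lemma insertIdx_eq_of_const (w : List ℕ) (i j b : ℕ) (hij : i ≤ j) (hj : j ≤ w.length)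
    (hc : ∀ x ∈ (w.take j).drop i, x = b) :
    w.insertIdx i b = w.insertIdx j b := by
  set mid := (w.take j).drop i with hmid
  have hmidr : mid = List.replicate (j - i) b := by
    rw [List.eq_replicate_iff]
    constructor
    · rw [hmid, List.length_drop, List.length_take]; omega
    · exact hc
  have hw : w = w.take i ++ mid ++ w.drop j := by
    rw [hmid]
    have : w.take i = (w.take j).take i := by rw [List.take_take]; congr 1; omega
    rw [this, List.append_assoc, ← List.append_assoc, List.take_append_drop, List.take_append_drop]
  have hlen1 : (w.take i).length = i := by rw [List.length_take]; omega
  have hlen2 : (w.take i ++ mid).length = j := by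
    rw [List.length_append, hlen1, hmidr, List.length_replicate]; omega
  calc w.insertIdx i b = (w.take i ++ (mid ++ w.drop j)).insertIdx (w.take i).length b := by
        rw [hlen1]; congr 1; rw [← List.append_assoc, ← hw]
    _ = w.take i ++ b :: (mid ++ w.drop j) := insertIdx_append _ _ _
    _ = (w.take i ++ mid) ++ b :: w.drop j := by
        rw [hmidr, List.append_assoc]
        congr 1
        exact cons_replicate_append _ _ _
    _ = ((w.take i ++ mid) ++ w.drop j).insertIdx j b := by
        rw [← hlen2, insertIdx_append]
    _ = w.insertIdx j b := by congr 1; rw [← hw]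

lemma vt_unique_core (w : List ℕ) (hw : ∀ x ∈ w, x ≤ 1) (i j b c M : ℕ)
    (hb : b ≤ 1) (hc : c ≤ 1) (hij : i ≤ j) (hj : j ≤ w.length) (hM : w.length + 2 ≤ M)
    (h : ((vtSyn (w.insertIdx i b) : ℕ) : ZMod M) = ((vtSyn (w.insertIdx j c) : ℕ) : ZMod M)) :
    w.insertIdx i b = w.insertIdx j c := by
  have hi : i ≤ w.length := le_trans hij hj
  rw [vtSyn_insertIdx w i b hi, vtSyn_insertIdx w j c hj] at h
  set A := (i+1)*b + (w.drop i).sum with hA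
  set B := (j+1)*c + (w.drop j).sum with hB
  have hsub : ∀ k, k ≤ w.length → (w.drop k).sum ≤ w.length - k := by
    intro k hk
    have := bits_sum_le (w.drop k) (fun x hx => hw x (List.mem_of_mem_drop hx))
    rwa [List.length_drop] at this
  have hAlt : A < M := by
    have := hsub i hi
    rcases Nat.le_one_iff_eq_zero_or_eq_one.1 hb with rfl | rfl <;> simp [hA] <;> omega
  have hBlt : B < M := by
    have := hsub j hj
    rcases Nat.le_one_iff_eq_zero_or_eq_one.1 hc with rfl | rfl <;> simp [hB] <;> omega
  have hAB : A = B := by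
    have e1 : vtSyn w + (i+1)*b + (w.drop i).sum = vtSyn w + A := by rw [hA]; ring
    have e2 : vtSyn w + (j+1)*c + (w.drop j).sum = vtSyn w + B := by rw [hB]; ring
    rw [e1, e2] at h
    push_cast at h
    have h'' : ((A : ℕ) : ZMod M) = ((B : ℕ) : ZMod M) := by
      exact_mod_cast add_left_cancel h
    rw [← ZMod.val_cast_of_lt hAlt, ← ZMod.val_cast_of_lt hBlt, h'']
  -- split drop i sum
  have hsplit := drop_sum_split w i j hij
  set mid := (w.take j).drop i with hmid
  have hmidlen : mid.length = j - i := by rw [hmid, List.length_drop, List.length_take]; omega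
  have hmidbits : ∀ x ∈ mid, x ≤ 1 := fun x hx =>
    hw x (List.mem_of_mem_take (List.mem_of_mem_drop hx))
  have hmidsum := bits_sum_le mid hmidbits
  rw [hA, hB, hsplit] at hAB
  rcases Nat.le_one_iff_eq_zero_or_eq_one.1 hb with rfl | rfl <;>
    rcases Nat.le_one_iff_eq_zero_or_eq_one.1 hc with rfl | rfl
  · -- b=0 c=0
    apply insertIdx_eq_of_const w i j 0 hij hj
    have : mid.sum = 0 := by omega
    intro x hx
    have := List.single_le_sum (l := mid) (fun y _ => Nat.zero_le y) x hx
    omega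
  · exfalso; omega
  · exfalso; omega
  · apply insertIdx_eq_of_const w i j 1 hij hj
    have : mid.sum = mid.length := by omega
    exact bits_sum_eq mid hmidbits this

lemma vt_unique (w : List ℕ) (hw : ∀ x ∈ w, x ≤ 1) (i j b c M : ℕ)
    (hb : b ≤ 1) (hc : c ≤ 1) (hi : i ≤ w.length) (hj : j ≤ w.length) (hM : w.length + 2 ≤ M)
    (h : ((vtSyn (w.insertIdx i b) : ℕ) : ZMod M) = ((vtSyn (w.insertIdx j c) : ℕ) : ZMod M)) :
    w.insertIdx i b = w.insertIdx j c := by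
  rcases le_total i j with hij | hij
  · exact vt_unique_core w hw i j b c M hb hc hij hj hM h
  · exact (vt_unique_core w hw j i c b M hc hb hij hi hM h.symm).symm

def cmpb (a b : ℤ) : ℕ := if a ≤ b then 1 else 0

lemma aux_nil : auxSeq [] = [] := rfl
lemma aux_single (a : ℤ) : auxSeq [a] = [] := rfl
lemma aux_cons2 (a b : ℤ) (t : List ℤ) :
    auxSeq (a :: b :: t) = cmpb a b :: auxSeq (b :: t) := rfl

lemma aux_cons (c : ℤ) (h : ℤ) (w : List ℤ) (hw : w = h :: w.tail) :
    auxSeq (c :: w) = cmpb c h :: auxSeq w := by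
  rw [hw]; rfl

lemma aux_length (w : List ℤ) : (auxSeq w).length = w.length - 1 := by
  simp [auxSeq]

lemma aux_bits (w : List ℤ) : ∀ x ∈ auxSeq w, x ≤ 1 := by
  induction w with
  | nil => simp [aux_nil]
  | cons a t ih =>
    cases t with
    | nil => simp [aux_single]
    | cons b t' =>
      rw [aux_cons2]
      intro x hx
      rcases List.mem_cons.1 hx with rfl | hx
      · unfold cmpb; split <;> omega
      · exact ih x hx

lemma cmpb_mid (c a r0 : ℤ) : cmpb c r0 = cmpb c a ∨ cmpb c r0 = cmpb a r0 := by
  unfold cmpb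
  by_cases h1 : c ≤ a <;> by_cases h2 : a ≤ r0 <;> by_cases h3 : c ≤ r0 <;>
    simp [h1, h2, h3] <;> omega

lemma aux_insert : ∀ (l : List ℤ) (a : ℤ) (r : List ℤ), l ++ r ≠ [] →
    ∃ i b, b ≤ 1 ∧ i ≤ (auxSeq (l ++ r)).length ∧
      auxSeq (l ++ a :: r) = (auxSeq (l ++ r)).insertIdx i b := by
  intro l
  induction l with
  | nil =>
    intro a r hr
    cases r with
    | nil => simp at hr
    | cons r0 t =>
      refine ⟨0, cmpb a r0, ?_, by simp, ?_⟩
      · unfold cmpb; split <;> omega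
      · simp [aux_cons2, List.insertIdx]
  | cons c l' ih =>
    intro a r hr
    by_cases hempty : l' ++ r = []
    · rcases List.append_eq_nil_iff.1 hempty with ⟨rfl, rfl⟩
      refine ⟨0, cmpb c a, by unfold cmpb; split <;> omega, by simp [aux_single], ?_⟩
      simp [aux_cons2, aux_single, List.insertIdx]
    · cases l' with
      | cons d l'' =>
        -- heads of l'++a::r and l'++r agree (both d)
        obtain ⟨i, b, hb, hi, heq⟩ := ih a r hempty
        refine ⟨i + 1, b, hb, ?_, ?_⟩
        · simp only [List.cons_append] at hi ⊢
          rw [aux_cons2, List.length_cons]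
          omega
        · simp only [List.cons_append] at heq ⊢
          rw [aux_cons2, aux_cons2, List.insertIdx_succ_cons, heq]
      | nil =>
        -- l' = [], so r ≠ []
        cases r with
        | nil => simp at hempty
        | cons r0 t =>
          simp only [List.nil_append, List.cons_append] at *
          rcases cmpb_mid c a r0 with h | h
          · -- cmpb c r0 = cmpb c a : x-aux = cmpb c a :: cmpb a r0 :: aux(r0::t)
            refine ⟨1, cmpb a r0, by unfold cmpb; split <;> omega, ?_, ?_⟩
            · rw [aux_cons c r0 _ rfl, List.length_cons]; omega
            · rw [aux_cons2, aux_cons2, aux_cons c r0 _ rfl,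
                List.insertIdx_succ_cons, h]
              rfl
          · refine ⟨0, cmpb c a, by unfold cmpb; split <;> omega, by simp, ?_⟩
            rw [aux_cons2, aux_cons2, aux_cons c r0 _ rfl, h]
            rfl

lemma aux_strip : ∀ (l u v : List ℤ), u.length = v.length →
    auxSeq (l ++ u) = auxSeq (l ++ v) → auxSeq u = auxSeq v := by
  intro l
  induction l with
  | nil => intro u v _ h; simpa using h
  | cons c l' ih =>
    intro u v hl h
    by_cases he : l' ++ u = []
    · rcases List.append_eq_nil_iff.1 he with ⟨rfl, rfl⟩
      cases v with
      | nil => rfl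
      | cons v0 t => simp at hl
    · have he' : l' ++ v ≠ [] := by
        intro hc
        apply he
        have hlen : (l' ++ u).length = (l' ++ v).length := by simp [hl]
        rw [hc] at hlen
        exact List.eq_nil_of_length_eq_zero (by simpa using hlen)
      obtain ⟨h1, t1, e1⟩ := List.exists_cons_of_ne_nil he
      obtain ⟨h2, t2, e2⟩ := List.exists_cons_of_ne_nil he'
      rw [List.cons_append, List.cons_append,
        aux_cons c h1 (l' ++ u) (by rw [e1]; rfl),
        aux_cons c h2 (l' ++ v) (by rw [e2]; rfl)] at h
      exact ih u v hl (List.cons.injEq _ _ _ _ ▸ h).2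

theorem chain_cons' {R : ℤ → ℤ → Prop} {a b : ℤ} {l : List ℤ} :
    List.Chain R a (b :: l) ↔ R a b ∧ List.Chain R b l := List.isChain_cons_cons

lemma chain_all {R : ℤ → ℤ → Prop} (hR : Transitive R) :
    ∀ (l : List ℤ) (a : ℤ), List.Chain R a l → ∀ x ∈ l, R a x := by
  intro l
  induction l with
  | nil => simp
  | cons h t ih =>
    intro a hc x hx
    rw [chain_cons'] at hc
    rcases List.mem_cons.1 hx with rfl | hx
    · exact hc.1
    · exact hR hc.1 (ih h hc.2 x hx)

lemma chain_le_last : ∀ (l : List ℤ) (a e : ℤ),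
    List.Chain (· ≤ ·) a (l ++ [e]) → ∀ x ∈ l, x ≤ e := by
  intro l
  induction l with
  | nil => simp
  | cons m t ih =>
    intro a e hc x hx
    rw [List.cons_append, chain_cons'] at hc
    rcases List.mem_cons.1 hx with rfl | hx
    · exact chain_all (R := (· ≤ ·)) (fun _ _ _ h1 h2 => le_trans h1 h2) _ _ hc.2 e (by simp)
    · exact ih m e hc.2 x hx

lemma gen_chain (s : ℤ) : ∀ (mid : List ℤ) (a : ℤ) (r : List ℤ),
    auxSeq (a :: (mid ++ r)) = auxSeq (mid ++ s :: r) →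
    List.Chain (· ≤ ·) a (mid ++ [s]) ∨ List.Chain (· > ·) a (mid ++ [s]) := by
  intro mid
  induction mid with
  | nil =>
    intro a r _
    rcases le_or_gt a s with h | h
    · exact Or.inl (by simp [chain_cons', List.Chain.nil, h])
    · exact Or.inr (by simp [chain_cons', List.Chain.nil]; omega)
  | cons m t ih =>
    intro a r H
    simp only [List.cons_append] at H
    rw [aux_cons2] at H
    -- RHS head
    have hrhs : ∃ h, auxSeq (m :: (t ++ s :: r)) = cmpb m h :: auxSeq (t ++ s :: r) ∧
        (t ++ [s]).head? = some h := by
      cases t with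
      | nil => exact ⟨s, by simp only [List.nil_append]; rw [aux_cons2], rfl⟩
      | cons m2 t' => exact ⟨m2, by simp only [List.cons_append]; rw [aux_cons2], rfl⟩
    obtain ⟨h, hr1, hr2⟩ := hrhs
    rw [hr1] at H
    have hhead : cmpb a m = cmpb m h := (List.cons.injEq _ _ _ _ ▸ H).1
    have htail : auxSeq (m :: (t ++ r)) = auxSeq (t ++ s :: r) := (List.cons.injEq _ _ _ _ ▸ H).2
    rcases ih m r htail with hc | hc
    · left
      rw [List.cons_append, chain_cons']
      refine ⟨?_, hc⟩
      -- m ≤ h from chain, then cmpb a m = 1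
      have hmh : m ≤ h := by
        cases t with
        | nil =>
          have hs : s = h := by simpa using hr2
          subst hs
          rw [List.nil_append, chain_cons'] at hc
          exact hc.1
        | cons m2 t' =>
          have hs : m2 = h := by simpa using hr2
          subst hs
          rw [List.cons_append, chain_cons'] at hc
          exact hc.1
      have : cmpb m h = 1 := by unfold cmpb; simp [hmh]
      rw [this] at hhead
      unfold cmpb at hhead
      by_cases hle : a ≤ m
      · exact hle
      · simp [hle] at hhead
    · right
      rw [List.cons_append, chain_cons']
      refine ⟨?_, hc⟩
      have hmh : m > h := by
        cases t with
        | nil =>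
          have hs : s = h := by simpa using hr2
          subst hs
          rw [List.nil_append, chain_cons'] at hc
          exact hc.1
        | cons m2 t' =>
          have hs : m2 = h := by simpa using hr2
          subst hs
          rw [List.cons_append, chain_cons'] at hc
          exact hc.1
      have : cmpb m h = 0 := by unfold cmpb; simp; omega
      rw [this] at hhead
      unfold cmpb at hhead
      by_cases hle : a ≤ m
      · simp [hle] at hhead
      · simp at hle; exact hle

lemma mid_eq (s : ℤ) (mid r : List ℤ)
    (h : auxSeq (s :: (mid ++ r)) = auxSeq (mid ++ s :: r)) : ∀ m ∈ mid, m = s := by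
  rcases gen_chain s mid s r h with hc | hc
  · intro m hm
    have h1 : s ≤ m := chain_all (R := (· ≤ ·)) (fun _ _ _ h1 h2 => le_trans h1 h2) _ _ hc m (List.mem_append_left _ hm)
    have h2 : m ≤ s := chain_le_last mid s s hc m hm
    omega
  · exfalso
    have := chain_all (R := (· > ·)) (fun _ _ _ h1 h2 => lt_trans h2 h1) _ _ hc s (by simp)
    exact lt_irrefl s this

def S : ℤ → List ℤ → ℤ
  | _, [] => 0
  | prev, a :: t => mods4 (a - prev) + S a t

lemma mods4_bounds (a : ℤ) : 1 ≤ mods4 a ∧ mods4 a ≤ 4 := by unfold mods4; omega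

lemma S_nonneg : ∀ (prev : ℤ) (x : List ℤ), 0 ≤ S prev x := by
  intro prev x
  induction x generalizing prev with
  | nil => simp [S]
  | cons a t ih =>
    have := mods4_bounds (a - prev)
    have := ih a
    simp only [S]; omega

lemma altSeq_length (T : ℕ) : (altSeq T).length = T := by simp [altSeq]

lemma altSeq_getElem (T q : ℕ) (h : q < T) :
    (altSeq T)[q]'(by rw [altSeq_length]; exact h) = ((q % 4 : ℕ) : ℤ) + 1 := by
  simp [altSeq]

lemma emb : ∀ (x : List ℤ) (prev : ℤ) (p T : ℕ), IsQ x →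
    prev % 4 = (p : ℤ) % 4 → (p : ℤ) + S prev x ≤ (T : ℤ) →
    x.Sublist ((altSeq T).drop p) := by
  intro x
  induction x with
  | nil => intro _ _ _ _ _ _; exact List.nil_sublist _
  | cons a t ih =>
    intro prev p T hQ hmod hsum
    have ha : 1 ≤ a ∧ a ≤ 4 := hQ a (by simp)
    set d := mods4 (a - prev) with hd
    have hdb : 1 ≤ d ∧ d ≤ 4 := mods4_bounds _
    have hSt : 0 ≤ S a t := S_nonneg a t
    have hsum' : (p : ℤ) + d + S a t ≤ T := by
      simp only [S] at hsum; omega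
    set step := d.toNat with hstep
    have hstepd : (step : ℤ) = d := Int.toNat_of_nonneg (by omega)
    have hstep1 : 1 ≤ step := by omega
    have hp' : p + step ≤ T := by
      have : ((p + step : ℕ) : ℤ) ≤ T := by push_cast; omega
      exact_mod_cast this
    -- the value at position p + (step - 1) is a
    have hq : p + (step - 1) < T := by omega
    have hval : (altSeq T)[p + (step - 1)]'(by rw [altSeq_length]; omega) = a := by
      rw [altSeq_getElem T _ hq]
      have h1 : (((p + (step - 1)) % 4 : ℕ) : ℤ) = ((p + (step - 1) : ℕ) : ℤ) % 4 := by
        push_cast; ring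
      have h2 : ((p + (step - 1) : ℕ) : ℤ) = (p : ℤ) + step - 1 := by omega
      rw [h1, h2, hstepd]
      have hdm : d % 4 = (a - prev) % 4 := by rw [hd]; unfold mods4; omega
      omega
    -- IH for the tail
    have hQt : IsQ t := fun b hb => hQ b (by simp [hb])
    have hmod' : a % 4 = ((p + step : ℕ) : ℤ) % 4 := by
      push_cast
      have hdm : d % 4 = (a - prev) % 4 := by rw [hd]; unfold mods4; omega
      omega
    have hsum'' : ((p + step : ℕ) : ℤ) + S a t ≤ T := by push_cast; omega
    have hsub := ih a (p + step) T hQt hmod' hsum''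
    -- assemble
    have hdecomp : (altSeq T).drop p =
        ((altSeq T).drop p).take step ++ (altSeq T).drop (p + step) := by
      rw [← List.drop_drop]
      exact (List.take_append_drop _ _).symm
    rw [hdecomp]
    set seg := ((altSeq T).drop p).take step with hseg
    have hseglen : seg.length = step := by
      rw [hseg, List.length_take, List.length_drop, altSeq_length]; omega
    have hmem : a ∈ seg := by
      have h1 : step - 1 < seg.length := by omega
      have h2 : seg[step - 1]'h1 = a := by
        simp only [hseg, List.getElem_take, List.getElem_drop]
        exact hval
      exact h2 ▸ List.getElem_mem h1
    have h1 : List.Sublist [a] seg := List.singleton_sublist.2 hmem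
    exact List.Sublist.append h1 hsub

def finv : ℤ → ℤ → List ℤ → List ℤ
  | _, _, [] => []
  | px, py, a :: t =>
    mods4 (py + 5 - mods4 (a - px)) :: finv a (mods4 (py + 5 - mods4 (a - px))) t

lemma finv_length : ∀ (px py : ℤ) (x : List ℤ), (finv px py x).length = x.length := by
  intro px py x
  induction x generalizing px py with
  | nil => rfl
  | cons a t ih => simp [finv, ih]

lemma finv_isQ : ∀ (px py : ℤ) (x : List ℤ), IsQ (finv px py x) := by
  intro px py x
  induction x generalizing px py with
  | nil => intro b hb; simp [finv] at hb
  | cons a t ih =>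
    intro b hb
    simp only [finv, List.mem_cons] at hb
    rcases hb with rfl | hb
    · exact mods4_bounds _
    · exact ih a _ b hb

lemma finv_S : ∀ (px py : ℤ) (x : List ℤ), S py (finv px py x) = 5 * x.length - S px x := by
  intro px py x
  induction x generalizing px py with
  | nil => simp [finv, S]
  | cons a t ih =>
    simp only [finv, S, List.length_cons, ih a]
    have h1 : mods4 (mods4 (py + 5 - mods4 (a - px)) - py) = 5 - mods4 (a - px) := by
      unfold mods4; omega
    rw [h1]
    push_cast
    ring

lemma finv_finv : ∀ (px py : ℤ) (x : List ℤ), IsQ x → finv py px (finv px py x) = x := by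
  intro px py x
  induction x generalizing px py with
  | nil => intro _; rfl
  | cons a t ih =>
    intro hQ
    have ha := hQ a (by simp)
    simp only [finv]
    have h1 : mods4 (px + 5 - mods4 (mods4 (py + 5 - mods4 (a - px)) - py)) = a := by
      unfold mods4; omega
    rw [h1]
    exact congrArg _ (ih a (mods4 (py + 5 - mods4 (a - px))) (fun b hb => hQ b (by simp [hb])))

lemma sub_one : ∀ {z x : List ℤ}, z.Sublist x → z.length + 1 = x.length →
    ∃ l a r, x = l ++ a :: r ∧ z = l ++ r := by
  intro z x h
  induction h with
  | slnil => intro hl; simp at hl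
  | @cons t x' a h ih =>
    intro hl
    simp only [List.length_cons] at hl
    have : t = x' := h.eq_of_length (by omega)
    subst this
    exact ⟨[], a, t, rfl, rfl⟩
  | @cons_cons z' x' a h ih =>
    intro hl
    simp only [List.length_cons] at hl
    obtain ⟨l, b, r, hx, hz⟩ := ih (by omega)
    exact ⟨a :: l, b, r, by rw [hx]; rfl, by rw [hz]; rfl⟩

lemma del_core (n : ℕ) (hn : 2 ≤ n) (a : ZMod n) (bb : ZMod 4)
    (l mid r : List ℤ) (s t : ℤ)
    (hx : l ++ s :: (mid ++ r) ∈ VTn n a bb) (hy : (l ++ mid) ++ t :: r ∈ VTn n a bb) :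
    l ++ s :: (mid ++ r) = (l ++ mid) ++ t :: r := by
  obtain ⟨hxlen, hxQ, hxsyn, hxsum⟩ := hx
  obtain ⟨hylen, hyQ, hysyn, hysum⟩ := hy
  set z := l ++ (mid ++ r) with hzdef
  have hzlen : z.length + 1 = n := by
    rw [← hxlen]; simp [hzdef]; omega
  -- s and t are in range
  have hs : 1 ≤ s ∧ s ≤ 4 := hxQ s (by simp)
  have ht : 1 ≤ t ∧ t ≤ 4 := hyQ t (by simp)
  -- s = t
  have hst : s = t := by
    have hxs : (l ++ s :: (mid ++ r)).sum = z.sum + s := by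
      simp [hzdef, List.sum_append]; ring
    have hys : ((l ++ mid) ++ t :: r).sum = z.sum + t := by
      simp [hzdef, List.sum_append]; ring
    have h1 : ((z.sum + s : ℤ) : ZMod 4) = ((z.sum + t : ℤ) : ZMod 4) := by
      rw [← hxs, ← hys, hxsum, hysum]
    push_cast at h1
    have h2 : ((s : ℤ) : ZMod 4) = ((t : ℤ) : ZMod 4) := by
      exact add_left_cancel h1
    have h3 : s ≡ t [ZMOD 4] := (ZMod.intCast_eq_intCast_iff _ _ _).1 h2
    have h4 : s % 4 = t % 4 := h3
    omega
  subst hst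
  -- aux insertions
  have hzne : z ≠ [] := by
    intro hc; rw [hc] at hzlen; simp at hzlen; omega
  obtain ⟨i, b1, hb1, hi, heq1⟩ := aux_insert l s (mid ++ r) (by rw [← hzdef]; exact hzne)
  have hassoc : (l ++ mid) ++ r = z := by rw [hzdef, List.append_assoc]
  obtain ⟨j, b2, hb2, hj, heq2⟩ := aux_insert (l ++ mid) s r (by rw [hassoc]; exact hzne)
  rw [hassoc] at hj heq2
  rw [← hzdef] at hi heq1
  -- apply VT uniqueness
  have hwlen : (auxSeq z).length = n - 2 := by
    rw [aux_length]; omega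
  have hM : (auxSeq z).length + 2 ≤ n := by omega
  have hsynd : ((vtSyn ((auxSeq z).insertIdx i b1) : ℕ) : ZMod n)
      = ((vtSyn ((auxSeq z).insertIdx j b2) : ℕ) : ZMod n) := by
    rw [← heq1, ← heq2, hxsyn, hysyn]
  have huniq := vt_unique (auxSeq z) (aux_bits z) i j b1 b2 n hb1 hb2 hi hj hM hsynd
  have hauxeq : auxSeq (l ++ s :: (mid ++ r)) = auxSeq ((l ++ mid) ++ s :: r) := by
    rw [heq1, heq2, huniq]
  -- strip l
  have hauxeq' : auxSeq (l ++ (s :: (mid ++ r))) = auxSeq (l ++ (mid ++ s :: r)) := by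
    rw [← List.append_assoc]; exact hauxeq
  have hstrip := aux_strip l (s :: (mid ++ r)) (mid ++ s :: r)
    (by simp only [List.length_cons, List.length_append]; omega) hauxeq'
  have hmid : ∀ m ∈ mid, m = s := mid_eq s mid r hstrip
  -- conclude
  have hrep : mid = List.replicate mid.length s :=
    List.eq_replicate_iff.2 ⟨rfl, hmid⟩
  rw [List.append_assoc]
  congr 1
  rw [hrep]
  exact cons_replicate_append _ _ _

lemma vtn_ball_eq (n : ℕ) (hn : 2 ≤ n) (a : ZMod n) (bb : ZMod 4)
    (x y : List ℤ) (hx : x ∈ VTn n a bb) (hy : y ∈ VTn n a bb)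
    (z : List ℤ) (hzx : z ∈ ball x) (hzy : z ∈ ball y) : x = y := by
  have hxlen : x.length = n := hx.1
  have hylen : y.length = n := hy.1
  rcases hzx with rfl | ⟨hl1, hs1⟩ | ⟨hl1, _, hs1⟩ <;>
    rcases hzy with h2 | ⟨hl2, hs2⟩ | ⟨hl2, _, hs2⟩
  · exact h2
  · omega
  · omega
  · subst h2; omega
  · -- deletion / deletion
    obtain ⟨l1, s, r1, hxd, hzd1⟩ := sub_one hs1 (by omega)
    obtain ⟨l2, t, r2, hyd, hzd2⟩ := sub_one hs2 (by omega)
    have hzz : l1 ++ r1 = l2 ++ r2 := by rw [← hzd1, ← hzd2]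
    rcases List.append_eq_append_iff.1 hzz with ⟨m, hm1, hm2⟩ | ⟨m, hm1, hm2⟩
    · subst hm1; subst hm2
      rw [hxd, hyd]
      exact del_core n hn a bb l1 m r2 s t (hxd ▸ hx) (hyd ▸ hy)
    · subst hm1; subst hm2
      rw [hxd, hyd]
      exact (del_core n hn a bb l2 m r1 t s (hyd ▸ hy) (hxd ▸ hx)).symm
  · omega
  · subst h2; omega
  · omega
  · -- insertion / insertion
    obtain ⟨l1, c1, r1, hzd1, hxd⟩ := sub_one hs1 (by omega)
    obtain ⟨l2, c2, r2, hzd2, hyd⟩ := sub_one hs2 (by omega)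
    have hzz : l1 ++ c1 :: r1 = l2 ++ c2 :: r2 := by rw [← hzd1, ← hzd2]
    rcases List.append_eq_append_iff.1 hzz with ⟨m, hm1, hm2⟩ | ⟨m, hm1, hm2⟩
    · cases m with
      | nil =>
        simp only [List.nil_append] at hm2
        injection hm2 with h1 h2
        rw [hxd, hyd, hm1, h2]
        simp
      | cons c m' =>
        rw [List.cons_append] at hm2
        injection hm2 with h1 h2
        have hx2 : x = (l1 ++ m') ++ c2 :: r2 := by rw [hxd, h2]; simp
        have hy2 : y = l1 ++ c1 :: (m' ++ r2) := by rw [hyd, hm1, ← h1]; simp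
        rw [hx2, hy2]
        exact (del_core n hn a bb l1 m' r2 c1 c2 (hy2 ▸ hy) (hx2 ▸ hx)).symm
    · cases m with
      | nil =>
        simp only [List.nil_append] at hm2
        injection hm2 with h1 h2
        rw [hxd, hyd, hm1, h2]
        simp
      | cons c m' =>
        rw [List.cons_append] at hm2
        injection hm2 with h1 h2
        have hy2 : y = (l2 ++ m') ++ c1 :: r1 := by rw [hyd, h2]; simp
        have hx2 : x = l2 ++ c2 :: (m' ++ r1) := by rw [hxd, hm1, ← h1]; simp
        rw [hx2, hy2]
        exact del_core n hn a bb l2 m' r1 c2 c1 (hx2 ▸ hx) (hy2 ▸ hy)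

def Fq : ℕ → Finset (List ℤ)
  | 0 => {[]}
  | n+1 => (({1,2,3,4} : Finset ℤ) ×ˢ Fq n).image (fun p => p.1 :: p.2)

lemma Fq_mem : ∀ (n : ℕ) (x : List ℤ), x ∈ Fq n ↔ (x.length = n ∧ IsQ x) := by
  intro n
  induction n with
  | zero =>
    intro x
    simp only [Fq, Finset.mem_singleton]
    constructor
    · rintro rfl; exact ⟨rfl, by intro a ha; simp at ha⟩
    · rintro ⟨h, _⟩; exact List.eq_nil_of_length_eq_zero h
  | succ k ih =>
    intro x
    simp only [Fq, Finset.mem_image, Finset.mem_product]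
    constructor
    · rintro ⟨⟨a, t⟩, ⟨ha, ht⟩, rfl⟩
      have hQt := (ih t).1 ht
      have ha' : 1 ≤ a ∧ a ≤ 4 := by
        simp only [Finset.mem_insert, Finset.mem_singleton] at ha
        rcases ha with rfl | rfl | rfl | rfl <;> norm_num
      refine ⟨by simp [hQt.1], ?_⟩
      intro b hb
      rcases List.mem_cons.1 hb with rfl | hb
      · exact ha'
      · exact hQt.2 b hb
    · rintro ⟨hlen, hQ⟩
      cases x with
      | nil => simp at hlen
      | cons a t =>
        refine ⟨(a, t), ⟨?_, (ih t).2 ⟨by simpa using hlen,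
          fun b hb => hQ b (by simp [hb])⟩⟩, rfl⟩
        have := hQ a (by simp)
        simp only [Finset.mem_insert, Finset.mem_singleton]
        omega

lemma Fq_card : ∀ n, (Fq n).card = 4 ^ n := by
  intro n
  induction n with
  | zero => rfl
  | succ k ih =>
    have hinj : Function.Injective (fun p : ℤ × List ℤ => p.1 :: p.2) := by
      intro p q h
      cases p; cases q
      simpa [Prod.ext_iff] using h
    have hcard4 : ({1,2,3,4} : Finset ℤ).card = 4 := by decide
    show ((({1,2,3,4} : Finset ℤ) ×ˢ Fq k).image (fun p => p.1 :: p.2)).card = 4 ^ (k+1)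
    rw [Finset.card_image_of_injective _ hinj, Finset.card_product, ih, hcard4]
    ring

lemma synTime_le_S (x : List ℤ) (hQ : IsQ x) : (synTime x : ℤ) ≤ S 0 x := by
  have hnn := S_nonneg 0 x
  have h0 : x.Sublist (altSeq ((S 0 x).toNat)) := by
    have := emb x 0 0 ((S 0 x).toNat) hQ (by norm_num)
      (by rw [Int.toNat_of_nonneg hnn]; omega)
    simpa using this
  have h1 : synTime x ≤ (S 0 x).toNat := Nat.sInf_le h0
  calc (synTime x : ℤ) ≤ ((S 0 x).toNat : ℤ) := by exact_mod_cast h1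
    _ = S 0 x := Int.toNat_of_nonneg hnn

/-- for all sufficiently large `n`, with `m = n - ⌈log₄ n⌉ - 5` and
`T = ⌈5n/2⌉`, there exists an `(n,T,B)`-synthesis code `C ⊆ Σ^n` with
`|C| ≥ 2^{2m}`: length `n`, synthesis time at most `2.5n`, correcting a single
insertion or deletion, with redundancy at most `2⌈log₄ n⌉ + 10` bits. -/
theorem exists_synthesis_code_special :
    ∃ N : ℕ, ∀ n : ℕ, N ≤ n →
      ∃ C : Set (List ℤ),
        (∀ x ∈ C, x.length = n ∧ IsQ x) ∧
        (∀ x ∈ C, (synTime x : ℤ) ≤ (((5 * n + 1) / 2 : ℕ) : ℤ)) ∧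
        (C.Pairwise fun x y => Disjoint (ball x) (ball y)) ∧
        2 ^ (2 * (n - Nat.clog 4 n - 5)) ≤ C.ncard := by
  use 100
  intro n hn
  haveI : NeZero n := ⟨by omega⟩
  set c := Nat.clog 4 n with hc
  have hc4 : n ≤ 4 ^ c := Nat.le_pow_clog (by norm_num) n
  have hfourmul : ∀ m : ℕ, 4 * m ≤ 4 ^ m := by
    intro m
    induction m with
    | zero => simp
    | succ k ih =>
      cases k with
      | zero => norm_num
      | succ k' =>
        calc 4 * (k' + 1 + 1) = 4 * (k'+1) + 4 := by ring
          _ ≤ 4^(k'+1) + 4 := by omega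
          _ ≤ 4^(k'+1) + 3 * 4^(k'+1) := by
              have h1 : (1:ℕ) ≤ 4 ^ (k'+1) := Nat.one_le_pow _ _ (by norm_num)
              omega
          _ = 4^(k'+1+1) := by ring
  have hc5 : c + 5 ≤ n := by
    rcases le_or_gt c 2 with h | h
    · omega
    · have h1 : 4 ^ (c - 1) < n := by
        have := Nat.pow_pred_clog_lt_self (b := 4) (by norm_num) (x := n) (by omega)
        simpa [hc, Nat.pred_eq_sub_one] using this
      have h2 : 4 * (c - 1) ≤ 4 ^ (c - 1) := hfourmul _
      omega
  set L : ℕ := (5 * n + 1) / 2 with hL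
  set f : List ℤ → ZMod n × ZMod 4 :=
    fun x => (((vtSyn (auxSeq x) : ℕ) : ZMod n), ((x.sum : ℤ) : ZMod 4)) with hf
  classical
  set LowF := (Fq n).filter (fun x => S 0 x ≤ (L : ℤ)) with hLowF
  have hlowcard : 2 ^ (2 * n - 1) ≤ LowF.card := by
    set HighF := (Fq n).filter (fun x => ¬ (S 0 x ≤ (L : ℤ))) with hHighF
    have hsplit : LowF.card + HighF.card = 4 ^ n := by
      rw [hLowF, hHighF, Finset.card_filter_add_card_filter_not, Fq_card]
    have hinj : HighF.card ≤ LowF.card := by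
      apply Finset.card_le_card_of_injOn (fun x => finv 0 0 x)
      · intro x hx
        rw [hHighF, Finset.mem_coe, Finset.mem_filter, Fq_mem] at hx
        obtain ⟨⟨hlen, hQ⟩, hS⟩ := hx
        rw [hLowF, Finset.mem_coe, Finset.mem_filter, Fq_mem]
        refine ⟨⟨by rw [finv_length, hlen], finv_isQ _ _ _⟩, ?_⟩
        rw [finv_S, hlen]
        push_cast at hS ⊢
        omega
      · intro x hx y hy hxy
        have hx' := Finset.mem_coe.1 hx
        have hy' := Finset.mem_coe.1 hy
        rw [hHighF, Finset.mem_filter, Fq_mem] at hx' hy'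
        have h := congrArg (finv 0 0) hxy
        rwa [finv_finv _ _ _ hx'.1.2, finv_finv _ _ _ hy'.1.2] at h
    have h2n : 4 ^ n = 2 ^ (2 * n) := by rw [pow_mul]; norm_num
    have he : 2 ^ (2*n) = 2 ^ (2*n-1) * 2 := by rw [← pow_succ]; congr 1; omega
    omega
  set K := 2 ^ (2 * (n - c - 5)) with hK
  have hfiber : ∃ p : ZMod n × ZMod 4,
      K ≤ (LowF.filter (fun x => f x = p)).card := by
    by_contra hcon
    push_neg at hcon
    have hsum := Finset.card_eq_sum_card_fiberwise
      (f := f) (s := LowF) (t := Finset.univ) (fun x _ => Finset.mem_univ _)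
    have hbound : ∀ p ∈ (Finset.univ : Finset (ZMod n × ZMod 4)),
        (LowF.filter (fun x => f x = p)).card ≤ K - 1 := by
      intro p _
      have := hcon p; omega
    have hsum2 := Finset.sum_le_card_nsmul _ _ _ hbound
    rw [smul_eq_mul] at hsum2
    have hcardu : (Finset.univ : Finset (ZMod n × ZMod 4)).card = n * 4 := by
      simp [Finset.card_univ]
    have hKpos : 1 ≤ K := Nat.one_le_pow _ _ (by norm_num)
    have he2 : n * 4 * (K - 1) + n * 4 = n * 4 * K := by
      have hK1 : K - 1 + 1 = K := by omega
      calc n * 4 * (K - 1) + n * 4 = n * 4 * ((K - 1) + 1) := by ring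
        _ = n * 4 * K := by rw [hK1]
    have hup : n * 4 * K ≤ 2 ^ (2 * n - 1) := by
      have e1 : 2 ^ (2 * n - 1) = 2 ^ (2 * (n - c - 5)) * 2 ^ (2 * c + 9) := by
        rw [← pow_add]; congr 1; omega
      rw [hK, e1]
      have h4n : n * 4 ≤ 2 ^ (2 * c + 9) := by
        have hn2 : n ≤ 2 ^ (2 * c) := by
          calc n ≤ 4 ^ c := hc4
            _ = 2 ^ (2 * c) := by rw [pow_mul]; norm_num
        calc n * 4 ≤ 2 ^ (2 * c) * 4 := by omega
          _ ≤ 2 ^ (2 * c) * 2 ^ 9 := by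
              exact Nat.mul_le_mul_left _ (by norm_num)
          _ = 2 ^ (2 * c + 9) := by rw [pow_add]
      calc n * 4 * 2 ^ (2 * (n - c - 5)) = 2 ^ (2 * (n - c - 5)) * (n * 4) := by ring
        _ ≤ 2 ^ (2 * (n - c - 5)) * 2 ^ (2 * c + 9) := Nat.mul_le_mul_left _ h4n
    rw [hcardu] at hsum2
    omega
  obtain ⟨p, hp⟩ := hfiber
  set F := LowF.filter (fun x => f x = p) with hF
  have hFmem : ∀ x ∈ F, x.length = n ∧ IsQ x ∧ S 0 x ≤ (L : ℤ) ∧ f x = p := by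
    intro x hx
    rw [hF, Finset.mem_filter, hLowF, Finset.mem_filter, Fq_mem] at hx
    exact ⟨hx.1.1.1, hx.1.1.2, hx.1.2, hx.2⟩
  have hFvtn : ∀ x ∈ F, x ∈ VTn n p.1 p.2 := by
    intro x hx
    obtain ⟨h1, h2, _, h4⟩ := hFmem x hx
    refine ⟨h1, h2, ?_, ?_⟩
    · rw [← h4]
    · rw [← h4]
  refine ⟨↑F, ?_, ?_, ?_, ?_⟩
  · intro x hx
    have := hFmem x (by exact_mod_cast hx)
    exact ⟨this.1, this.2.1⟩
  · intro x hx
    obtain ⟨_, h2, h3, _⟩ := hFmem x (by exact_mod_cast hx)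
    calc (synTime x : ℤ) ≤ S 0 x := synTime_le_S x h2
      _ ≤ (L : ℤ) := h3
  · intro x hx y hy hne
    rw [Set.disjoint_left]
    intro z hzx hzy
    exact hne (vtn_ball_eq n (by omega) p.1 p.2 x y
      (hFvtn x (by exact_mod_cast hx)) (hFvtn y (by exact_mod_cast hy)) z hzx hzy)
  · rw [Set.ncard_coe_finset]
    exact hp
end

section
/- For every positive integer n and integer T with n < T ≤ 4n, there exist a ∈ ℤ_n and b ∈ ℤ_4 and an injective map from {0,1}^m into VT_n(a,b,T) where m = ⌊log₂ A(n,T)⌋ − ⌈log₂ n⌉ − 2 (assuming m ≥ 1); consequently there is an (n,T,B)-synthesis code of size 2^m, i.e., with redundancy at most 2n − ⌊log₂ A(n,T)⌋ + log₂ n + 2 bits. -/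
lemma finite_len_Q (n : ℕ) : {x : List ℤ | x.length = n ∧ IsQ x}.Finite := by
  induction n with
  | zero =>
    apply Set.Finite.subset (Set.finite_singleton ([] : List ℤ))
    rintro x ⟨hx, -⟩
    simp [List.length_eq_zero_iff.mp hx]
  | succ n ih =>
    apply Set.Finite.subset (((Set.finite_Icc (1:ℤ) 4).prod ih).image
      (fun p : ℤ × List ℤ => p.1 :: p.2))
    rintro x ⟨hx, hq⟩
    cases x with
    | nil => simp at hx
    | cons h t =>
      refine ⟨(h, t), ⟨?_, ?_, ?_⟩, rfl⟩
      · exact Set.mem_Icc.mpr (hq h (by simp))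
      · simpa using hx
      · exact fun a ha => hq a (by simp [ha])

lemma finite_W (n : ℕ) (T : ℤ) : (W n T).Finite :=
  (finite_len_Q n).subset (fun x hx => ⟨hx.1, hx.2.1⟩)

/-- the direct encoder. For `n < T ≤ 4n` and
`m = ⌊log₂ A(n,T)⌋ - ⌈log₂ n⌉ - 2 ≥ 1`, there are `a ∈ ℤ_n`, `b ∈ ℤ_4` and an
injection from `{0,1}^m` into `VT_n(a,b,T)`; consequently there is an
`(n,T,B)`-synthesis code of size `2^m`. -/
theorem exists_direct_encoder (n : ℕ) (hn : 0 < n) (T : ℤ)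
    (hT1 : (n : ℤ) < T) (hT2 : T ≤ 4 * n)
    (m : ℕ) (hm : m = Nat.log 2 (A n T) - Nat.clog 2 n - 2) (hm1 : 1 ≤ m) :
    ∃ a : ZMod n, ∃ b : ZMod 4,
      (∃ f : (Fin m → Bool) → List ℤ,
        Function.Injective f ∧ Set.range f ⊆ VTnT n a b T) ∧
      ∃ C : Set (List ℤ), C ⊆ VTnT n a b T ∧ C.ncard = 2 ^ m := by
  haveI : NeZero n := ⟨hn.ne'⟩
  -- A is positive
  have hApos : 0 < A n T := by
    by_contra h
    push_neg at h
    interval_cases hA : A n T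
    simp [hA] at hm
    omega
  -- key counting inequality : 4 * n * 2 ^ m ≤ A n T
  have hlog : m + (Nat.clog 2 n + 2) = Nat.log 2 (A n T) := by omega
  have hkey : 4 * n * 2 ^ m ≤ A n T := by
    have h1 : 2 ^ Nat.log 2 (A n T) ≤ A n T := Nat.pow_log_le_self 2 hApos.ne'
    have h2 : n ≤ 2 ^ Nat.clog 2 n := Nat.le_pow_clog one_lt_two n
    calc 4 * n * 2 ^ m ≤ 4 * 2 ^ Nat.clog 2 n * 2 ^ m := by
          have := Nat.mul_le_mul_right (2 ^ m) (Nat.mul_le_mul_left 4 h2); exact this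
      _ = 2 ^ (m + (Nat.clog 2 n + 2)) := by ring
      _ ≤ A n T := by rw [hlog]; exact h1
  -- the finset of W n T
  set s : Finset (List ℤ) := (finite_W n T).toFinset with hs
  have hscard : s.card = A n T := by
    rw [hs, A, Set.ncard_eq_toFinset_card _ (finite_W n T)]
  -- pigeonhole
  set g : List ℤ → ZMod n × ZMod 4 :=
    fun x => (((vtSyn (auxSeq x) : ℕ) : ZMod n), ((x.sum : ℤ) : ZMod 4)) with hg
  have hmaps : ∀ x ∈ s, g x ∈ (Finset.univ : Finset (ZMod n × ZMod 4)) :=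
    fun x _ => Finset.mem_univ _
  have hcardlt : (Finset.univ : Finset (ZMod n × ZMod 4)).card * (2 ^ m - 1) < s.card := by
    have huniv : (Finset.univ : Finset (ZMod n × ZMod 4)).card = n * 4 := by
      simp [Finset.card_univ, ZMod.card]
    rw [huniv, hscard]
    have h2m : 1 ≤ 2 ^ m := Nat.one_le_two_pow
    calc n * 4 * (2 ^ m - 1) < n * 4 * 2 ^ m := by
          exact Nat.mul_lt_mul_of_pos_left (by omega) (by positivity)
      _ = 4 * n * 2 ^ m := by ring
      _ ≤ A n T := hkey
  obtain ⟨ab, -, hab⟩ := Finset.exists_lt_card_fiber_of_mul_lt_card_of_maps_to hmaps hcardlt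
  obtain ⟨a, b⟩ := ab
  -- the fiber
  set F : Finset (List ℤ) := s.filter (fun x => g x = (a, b)) with hF
  have hFcard : 2 ^ m ≤ F.card := by omega
  have hFsub : (F : Set (List ℤ)) ⊆ VTnT n a b T := by
    intro x hx
    simp only [hF, Finset.coe_filter, Set.mem_setOf_eq] at hx
    obtain ⟨hxs, hxg⟩ := hx
    have hxW : x ∈ W n T := by rwa [hs, Set.Finite.mem_toFinset] at hxs
    obtain ⟨hlen, hq, hsyn⟩ := hxW
    have h1 : ((vtSyn (auxSeq x) : ℕ) : ZMod n) = a := congrArg Prod.fst hxg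
    have h2 : ((x.sum : ℤ) : ZMod 4) = b := congrArg Prod.snd hxg
    exact ⟨⟨hlen, hq, h1, h2⟩, hsyn⟩
  -- extract subset of size 2^m
  obtain ⟨t, hts, htcard⟩ := Finset.exists_subset_card_eq hFcard
  have htsub : (t : Set (List ℤ)) ⊆ VTnT n a b T :=
    fun y hy => hFsub (hts hy)
  refine ⟨a, b, ?_, (t : Set (List ℤ)), htsub, ?_⟩
  · have hc : Fintype.card (Fin m → Bool) = t.card := by simp [htcard]
    let e1 : (Fin m → Bool) ≃ Fin t.card := Fintype.equivFinOfCardEq hc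
    let e2 : Fin t.card ≃ {x // x ∈ t} := t.equivFin.symm
    refine ⟨fun v => ((e2 (e1 v)) : List ℤ), ?_, ?_⟩
    · intro u v huv
      exact e1.injective (e2.injective (Subtype.ext huv))
    · rintro y ⟨v, rfl⟩
      exact htsub (e2 (e1 v)).2
  · rw [Set.ncard_coe_finset, htcard]
end
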